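/- arXiv:2110.07788 — 2 statements merged into one kernel-verified Lean document; each statement's English description precedes it below -/
import Mathlib

section
/- Define N_0 = 1 and N_i = ⌈√(T · N_{i-1})⌉ for a natural number T ≥ 4. Then with B̃ = ⌈log₂ log₂ T⌉, the partial sum N_1 + N_2 + ... + N_{B̃+1} is at least T. In particular, the algorithm with these batch sizes terminates within at most ⌈log₂ log₂ T⌉ + 1 batches. -/
theorem stmt_2 (T : ℕ) (hT : 4 ≤ T) (N : ℕ → ℕ)
    (h0 : N 0 = 1) (hrec : ∀ i : ℕ, N (i + 1) = ⌈Real.sqrt ((T : ℝ) * N i)⌉₊)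
    (B : ℕ) (hB : B = ⌈Real.logb 2 (Real.logb 2 (T : ℝ))⌉₊) :
    (T : ℕ) ≤ ∑ i ∈ Finset.Icc 1 (B + 1), N i := by
  have hT1 : (1:ℝ) < (T:ℝ) := by exact_mod_cast lt_of_lt_of_le (by norm_num) hT
  have hT0 : (0:ℝ) < (T:ℝ) := by linarith
  -- key induction: N i ≥ T^(1 - (1/2)^i)
  have key : ∀ i, (T:ℝ) ^ (1 - (1/2:ℝ)^i) ≤ (N i : ℝ) := by
    intro i
    induction i with
    | zero => simp [h0]
    | succ i ih =>
      have hNi0 : (0:ℝ) ≤ (T:ℝ) * N i := by positivity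
      have h1 : Real.sqrt ((T:ℝ) * N i) ≤ (N (i+1) : ℝ) := by
        rw [hrec i]; exact Nat.le_ceil _
      have hx0 : (0:ℝ) ≤ (T:ℝ) ^ (1 - (1/2:ℝ)^(i+1)) := by positivity
      have h2 : (T:ℝ) ^ (1 - (1/2:ℝ)^(i+1)) ≤ Real.sqrt ((T:ℝ) * N i) := by
        rw [Real.le_sqrt hx0 hNi0]
        have hsq : ((T:ℝ) ^ (1 - (1/2:ℝ)^(i+1)))^2
            = (T:ℝ) ^ ((1:ℝ) + (1 - (1/2:ℝ)^i)) := by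
          rw [← Real.rpow_natCast ((T:ℝ) ^ (1 - (1/2:ℝ)^(i+1))) 2,
            ← Real.rpow_mul (le_of_lt hT0)]
          congr 1
          push_cast
          ring
        rw [hsq, Real.rpow_add hT0, Real.rpow_one]
        exact mul_le_mul_of_nonneg_left ih (le_of_lt hT0)
      linarith
  -- T^((1/2)^B) ≤ 2
  have hlog2T : (2:ℝ) ≤ Real.logb 2 (T:ℝ) := by
    calc (2:ℝ) = Real.logb 2 4 := by
          rw [show (4:ℝ) = 2^(2:ℕ) by norm_num, Real.logb_pow,
            Real.logb_self_eq_one (by norm_num : (1:ℝ) < 2)]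
          norm_num
      _ ≤ Real.logb 2 (T:ℝ) := by
          apply Real.logb_le_logb_of_le (by norm_num : (1:ℝ) < 2) (by norm_num)
          exact_mod_cast hT
  have hlogpos : (0:ℝ) < Real.logb 2 (T:ℝ) := by linarith
  have hBge : Real.logb 2 (Real.logb 2 (T:ℝ)) ≤ (B:ℝ) := hB ▸ Nat.le_ceil _
  have hlogle : Real.logb 2 (T:ℝ) ≤ (2:ℝ)^B := by
    have := Real.rpow_le_rpow_of_exponent_le (by norm_num : (1:ℝ) ≤ 2) hBge
    rwa [Real.rpow_logb (by norm_num) (by norm_num) hlogpos,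
      Real.rpow_natCast] at this
  have hTB : (T:ℝ) ^ ((1/2:ℝ)^B) ≤ 2 := by
    have hTeq : (T:ℝ) = (2:ℝ) ^ (Real.logb 2 (T:ℝ)) := by
      rw [Real.rpow_logb (by norm_num) (by norm_num) hT0]
    calc (T:ℝ) ^ ((1/2:ℝ)^B)
        = (2:ℝ) ^ (Real.logb 2 (T:ℝ) * (1/2:ℝ)^B) := by
          rw [Real.rpow_mul (by norm_num)]
          rw [← hTeq]
      _ ≤ (2:ℝ) ^ (1:ℝ) := by
          apply Real.rpow_le_rpow_of_exponent_le (by norm_num)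
          have h2B : (0:ℝ) < (2:ℝ)^B := by positivity
          rw [show ((1/2:ℝ)^B) = ((2:ℝ)^B)⁻¹ by rw [← inv_pow]; norm_num]
          rw [mul_inv_le_iff₀ h2B, one_mul]
          exact hlogle
      _ = 2 := Real.rpow_one 2
  have hTB1 : (T:ℝ) ^ ((1/2:ℝ)^(B+1)) ≤ 2 := by
    refine le_trans ?_ hTB
    apply Real.rpow_le_rpow_of_exponent_le (le_of_lt hT1)
    exact pow_le_pow_of_le_one (by norm_num) (by norm_num) (by omega)
  -- N B ≥ T/2 and N (B+1) ≥ T/2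
  have half : ∀ k, (T:ℝ) ^ ((1/2:ℝ)^k) ≤ 2 → (T:ℝ)/2 ≤ (N k : ℝ) := by
    intro k hk
    refine le_trans ?_ (key k)
    have hpos : (0:ℝ) < (T:ℝ) ^ ((1/2:ℝ)^k) := by positivity
    have hinv : (1/2:ℝ) ≤ 1/((T:ℝ)^((1/2:ℝ)^k)) := by
      apply one_div_le_one_div_of_le hpos hk
    have heq : (T:ℝ) ^ (1 - (1/2:ℝ)^k) = (T:ℝ) * ((T:ℝ)^((1/2:ℝ)^k))⁻¹ := by
      rw [show (1 - (1/2:ℝ)^k) = 1 + (-(1/2:ℝ)^k) by ring, Real.rpow_add hT0,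
        Real.rpow_one, Real.rpow_neg (le_of_lt hT0)]
    rw [heq]
    calc (T:ℝ)/2 = (T:ℝ) * (1/2) := by ring
      _ ≤ (T:ℝ) * (1/((T:ℝ)^((1/2:ℝ)^k))) := mul_le_mul_of_nonneg_left hinv (le_of_lt hT0)
      _ = (T:ℝ) * ((T:ℝ)^((1/2:ℝ)^k))⁻¹ := by rw [one_div]
  -- conclude
  have hB1 : 1 ≤ B := by
    rw [hB]
    apply Nat.one_le_ceil_iff.mpr
    have : (1:ℝ) ≤ Real.logb 2 (Real.logb 2 (T:ℝ)) := by
      calc (1:ℝ) = Real.logb 2 2 := (Real.logb_self_eq_one (by norm_num : (1:ℝ) < 2)).symm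
        _ ≤ Real.logb 2 (Real.logb 2 (T:ℝ)) :=
            Real.logb_le_logb_of_le (by norm_num) (by norm_num) (by linarith)
    linarith
  have hsub : ({B, B+1} : Finset ℕ) ⊆ Finset.Icc 1 (B + 1) := by
    intro x hx
    simp only [Finset.mem_insert, Finset.mem_singleton] at hx
    rcases hx with h | h <;> simp [h, Finset.mem_Icc] <;> try omega
  have hsum : N B + N (B+1) ≤ ∑ i ∈ Finset.Icc 1 (B + 1), N i := by
    have := Finset.sum_le_sum_of_subset hsub (f := N)
    rwa [Finset.sum_pair (by omega : B ≠ B+1)] at this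
  have hreal : (T:ℝ) ≤ ((N B + N (B+1) : ℕ) : ℝ) := by
    push_cast
    have h1 := half B hTB
    have h2 := half (B+1) hTB1
    linarith
  have : T ≤ N B + N (B+1) := by exact_mod_cast hreal
  omega
end

section
/- Let T ≥ 2 be a real number, 0 < η < 1, B ≥ 2 a natural number, and define N_i = ⌈T^((1−η^i)/(1−η^B))⌉ for 1 ≤ i ≤ B−1. Then for every i with 2 ≤ i ≤ B−1, N_i · N_{i−1}^(−η) ≤ N_1 + N_1^(1−η). -/
theorem stmt_10 (T : ℝ) (hT : 2 ≤ T) (η : ℝ) (hη0 : 0 < η) (hη1 : η < 1)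
    (B : ℕ) (hB : 2 ≤ B) (N : ℕ → ℕ)
    (hN : ∀ i : ℕ, 1 ≤ i → i ≤ B - 1 →
      N i = ⌈T ^ ((1 - η ^ i) / (1 - η ^ B))⌉₊) :
    ∀ i : ℕ, 2 ≤ i → i ≤ B - 1 →
      (N i : ℝ) * (N (i - 1) : ℝ) ^ (-η) ≤ (N 1 : ℝ) + (N 1 : ℝ) ^ (1 - η) := by
  intro i hi2 hiB
  have hT0 : (0:ℝ) < T := by linarith
  have hT1 : (1:ℝ) ≤ T := by linarith
  have hηB : η ^ B < 1 := pow_lt_one₀ hη0.le hη1 (by omega)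
  have hD : (0:ℝ) < 1 - η ^ B := by linarith
  set e : ℕ → ℝ := fun j => (1 - η ^ j) / (1 - η ^ B) with he
  have he_nonneg : ∀ j, 0 ≤ e j := by
    intro j
    have h1 : η ^ j ≤ 1 := pow_le_one₀ hη0.le hη1.le
    exact div_nonneg (by linarith) hD.le
  have hone_le : ∀ j, (1:ℝ) ≤ T ^ (e j) := fun j =>
    Real.one_le_rpow hT1 (he_nonneg j)
  -- key exponent identity
  have hpow : η ^ i = η * η ^ (i - 1) := by
    conv_lhs => rw [show i = (i-1)+1 by omega]
    rw [pow_succ]; ring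
  have hei : e i = e 1 + η * e (i - 1) := by
    simp only [he]
    rw [hpow]; field_simp; ring
  have hNi := hN i (by omega) hiB
  have hNim := hN (i-1) (by omega) (by omega)
  have hN1 := hN 1 le_rfl (by omega)
  set a : ℝ := T ^ (e 1) with ha
  set b : ℝ := T ^ (e (i-1)) with hb
  have ha1 : (1:ℝ) ≤ a := hone_le 1
  have hb1 : (1:ℝ) ≤ b := hone_le (i-1)
  have hc : T ^ (e i) = a * b ^ η := by
    rw [hei, Real.rpow_add hT0, mul_comm η, Real.rpow_mul hT0.le]
  -- ceiling bounds (as reals)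
  have hN1a : a ≤ (N 1 : ℝ) := by rw [hN1]; exact Nat.le_ceil _
  have hNimb : b ≤ (N (i-1) : ℝ) := by rw [hNim]; exact Nat.le_ceil _
  have hN1ge : (1:ℝ) ≤ (N 1 : ℝ) := le_trans ha1 hN1a
  have hNimge : (1:ℝ) ≤ (N (i-1) : ℝ) := le_trans hb1 hNimb
  have hNipos : (0:ℝ) < a * b ^ η := by positivity
  have hNile : (N i : ℝ) ≤ a * b ^ η + 1 := by
    rw [hNi, hc]
    exact (Nat.ceil_lt_add_one hNipos.le).le
  have hbη : b ^ η ≤ (N (i-1) : ℝ) ^ η :=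
    Real.rpow_le_rpow (by linarith) hNimb hη0.le
  have hstep : (N i : ℝ) ≤ (N 1 : ℝ) * (N (i-1) : ℝ) ^ η + 1 := by
    have : a * b ^ η ≤ (N 1 : ℝ) * (N (i-1) : ℝ) ^ η :=
      mul_le_mul hN1a hbη (by positivity) (by linarith)
    linarith
  have hmneg : (0:ℝ) < (N (i-1) : ℝ) := by linarith
  have hmul : ((N (i-1) : ℝ)) ^ η * ((N (i-1) : ℝ)) ^ (-η) = 1 := by
    rw [← Real.rpow_add hmneg]; simp
  have hmle1 : ((N (i-1) : ℝ)) ^ (-η) ≤ 1 :=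
    Real.rpow_le_one_of_one_le_of_nonpos hNimge (by linarith)
  have hmnn : (0:ℝ) ≤ ((N (i-1) : ℝ)) ^ (-η) := by positivity
  have h1le : (1:ℝ) ≤ (N 1 : ℝ) ^ (1 - η) :=
    Real.one_le_rpow hN1ge (by linarith)
  calc (N i : ℝ) * (N (i-1) : ℝ) ^ (-η)
      ≤ ((N 1 : ℝ) * (N (i-1) : ℝ) ^ η + 1) * (N (i-1) : ℝ) ^ (-η) :=
        mul_le_mul_of_nonneg_right hstep hmnn
    _ = (N 1 : ℝ) * ((N (i-1) : ℝ) ^ η * (N (i-1) : ℝ) ^ (-η)) + (N (i-1) : ℝ) ^ (-η) := by ring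
    _ = (N 1 : ℝ) + (N (i-1) : ℝ) ^ (-η) := by rw [hmul, mul_one]
    _ ≤ (N 1 : ℝ) + (N 1 : ℝ) ^ (1 - η) := by linarith
end
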